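/- arXiv:2107.04877 — 7 statements merged into one kernel-verified Lean document; each statement's English description precedes it below -/
import Mathlib

section
/- For any connected graph G, the strong metric dimension of G equals the vertex cover number of the strong resolving graph of G. -/
open SimpleGraph Finset

variable {V : Type*}

/-- A vertex `x` resolves the pair `u, v` if it is at different distances from them. -/
def IsResolvingSet (G : SimpleGraph V) (S : Set V) : Prop :=
  ∀ u v : V, u ≠ v → ∃ x ∈ S, G.dist u x ≠ G.dist v x

/-- The metric dimension: minimum cardinality of a resolving set. -/
noncomputable def metricDim (G : SimpleGraph V) [Fintype V] : ℕ :=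
  sInf {n | ∃ S : Finset V, S.card = n ∧ IsResolvingSet G ↑S}

/-- `w` strongly resolves `u, v`. -/
def StronglyResolves (G : SimpleGraph V) (w u v : V) : Prop :=
  G.dist w u = G.dist w v + G.dist v u ∨ G.dist w v = G.dist w u + G.dist u v

def IsStrongResolvingSet (G : SimpleGraph V) (S : Set V) : Prop :=
  ∀ u v : V, u ≠ v → ∃ w ∈ S, StronglyResolves G w u v

noncomputable def strongMetricDim (G : SimpleGraph V) [Fintype V] : ℕ :=
  sInf {n | ∃ S : Finset V, S.card = n ∧ IsStrongResolvingSet G ↑S}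

/-- `u` is maximally distant from `v`. -/
def MaxDistant (G : SimpleGraph V) (u v : V) : Prop :=
  ∀ w : V, G.Adj u w → G.dist v w ≤ G.dist v u

def MutuallyMaxDistant (G : SimpleGraph V) (u v : V) : Prop :=
  MaxDistant G u v ∧ MaxDistant G v u

/-- The strong resolving graph of `G`. -/
def strongResolvingGraph (G : SimpleGraph V) : SimpleGraph V where
  Adj u v := u ≠ v ∧ MutuallyMaxDistant G u v
  symm := by
    constructor
    intro u v h
    exact ⟨h.1.symm, h.2.2, h.2.1⟩
  loopless := by
    constructor
    intro u h
    exact h.1 rfl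

def IsVertexCover (H : SimpleGraph V) (S : Set V) : Prop :=
  ∀ u v : V, H.Adj u v → u ∈ S ∨ v ∈ S

noncomputable def vertexCoverNum (H : SimpleGraph V) [Fintype V] : ℕ :=
  sInf {n | ∃ S : Finset V, S.card = n ∧ _root_.IsVertexCover H ↑S}

def IsLocalResolvingSet (G : SimpleGraph V) (S : Set V) : Prop :=
  ∀ u v : V, G.Adj u v → ∃ x ∈ S, G.dist u x ≠ G.dist v x

noncomputable def localMetricDim (G : SimpleGraph V) [Fintype V] : ℕ :=
  sInf {n | ∃ S : Finset V, S.card = n ∧ IsLocalResolvingSet G ↑S}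

def IsIndepVertexSet (G : SimpleGraph V) (S : Set V) : Prop :=
  S.Pairwise fun u v => ¬ G.Adj u v

noncomputable def indepNum (G : SimpleGraph V) [Fintype V] : ℕ :=
  sSup {n | ∃ S : Finset V, S.card = n ∧ IsIndepVertexSet G ↑S}

def IsAdjResolvingSet (G : SimpleGraph V) (S : Set V) : Prop :=
  ∀ x y : V, x ≠ y → x ∉ S → y ∉ S →
    ∃ s ∈ S, (G.Adj s x ∧ ¬ G.Adj s y) ∨ (¬ G.Adj s x ∧ G.Adj s y)

noncomputable def adjDim (G : SimpleGraph V) [Fintype V] : ℕ :=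
  sInf {n | ∃ S : Finset V, S.card = n ∧ IsAdjResolvingSet G ↑S}

def IsKResolvingSet (G : SimpleGraph V) (k : ℕ) (S : Finset V) : Prop :=
  ∀ x y : V, x ≠ y → k ≤ (S.filter fun w => G.dist x w ≠ G.dist y w).card

noncomputable def kMetricDim (G : SimpleGraph V) [Fintype V] (k : ℕ) : ℕ :=
  sInf {n | ∃ S : Finset V, S.card = n ∧ IsKResolvingSet G k S}

def IsKMetricDimensional (G : SimpleGraph V) (k : ℕ) : Prop :=
  (∃ S : Finset V, IsKResolvingSet G k S) ∧
    ∀ j : ℕ, (∃ S : Finset V, IsKResolvingSet G j S) → j ≤ k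

/-- distance from a vertex to a finite set of vertices -/
noncomputable def fsetDist (G : SimpleGraph V) (v : V) (P : Finset V) : ℕ :=
  sInf {d | ∃ w ∈ P, G.dist v w = d}

def IsResolvingPartition [Fintype V] [DecidableEq V] (G : SimpleGraph V)
    (Pt : Finpartition (Finset.univ : Finset V)) : Prop :=
  ∀ u v : V, u ≠ v → ∃ P ∈ Pt.parts, fsetDist G u P ≠ fsetDist G v P

noncomputable def partitionDim (G : SimpleGraph V) [Fintype V] [DecidableEq V] : ℕ :=
  sInf {n | ∃ Pt : Finpartition (Finset.univ : Finset V), Pt.parts.card = n ∧ IsResolvingPartition G Pt}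

def SetStronglyResolves (G : SimpleGraph V) (W : Finset V) (x y : V) : Prop :=
  x ∉ W ∧ y ∉ W ∧
    (fsetDist G x W = G.dist x y + fsetDist G y W ∨
      fsetDist G y W = G.dist y x + fsetDist G x W)

def IsStrongResolvingPartition [Fintype V] [DecidableEq V] (G : SimpleGraph V)
    (Pt : Finpartition (Finset.univ : Finset V)) : Prop :=
  ∀ Q ∈ Pt.parts, ∀ x ∈ Q, ∀ y ∈ Q, x ≠ y →
    ∃ P ∈ Pt.parts, SetStronglyResolves G P x y

noncomputable def strongPartitionDim (G : SimpleGraph V) [Fintype V] [DecidableEq V] : ℕ :=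
  sInf {n | ∃ Pt : Finpartition (Finset.univ : Finset V),
    Pt.parts.card = n ∧ IsStrongResolvingPartition G Pt}

/-- distance from an edge (as an unordered pair) to a vertex -/
noncomputable def edgeDist (G : SimpleGraph V) (e : Sym2 V) (v : V) : ℕ :=
  Sym2.lift ⟨fun a b => min (G.dist a v) (G.dist b v), fun a b => min_comm _ _⟩ e

def IsEdgeResolvingSet (G : SimpleGraph V) (S : Set V) : Prop :=
  ∀ e ∈ G.edgeSet, ∀ f ∈ G.edgeSet, e ≠ f → ∃ x ∈ S, edgeDist G e x ≠ edgeDist G f x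

noncomputable def edgeMetricDim (G : SimpleGraph V) [Fintype V] : ℕ :=
  sInf {n | ∃ S : Finset V, S.card = n ∧ IsEdgeResolvingSet G ↑S}

noncomputable def Rset (G : SimpleGraph V) [Fintype V] (x y : V) : Finset V :=
  Finset.univ.filter fun w => G.dist x w ≠ G.dist y w

def IsResolvingFunction (G : SimpleGraph V) [Fintype V] (f : V → ℝ) : Prop :=
  (∀ v : V, 0 ≤ f v ∧ f v ≤ 1) ∧
    ∀ x y : V, x ≠ y → 1 ≤ ∑ w ∈ Rset G x y, f w

noncomputable def fracMetricDim (G : SimpleGraph V) [Fintype V] : ℝ :=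
  sInf {t : ℝ | ∃ f : V → ℝ, IsResolvingFunction G f ∧ t = ∑ v, f v}

def AreTwins (G : SimpleGraph V) (u v : V) : Prop :=
  u ≠ v ∧ (G.neighborSet u = G.neighborSet v ∨
    insert u (G.neighborSet u) = insert v (G.neighborSet v))

noncomputable def graphDiam (G : SimpleGraph V) : ℕ :=
  sSup (Set.range fun p : V × V => G.dist p.1 p.2)



section Aux

lemma exists_adj_dist_aux (G : SimpleGraph V) (hG : G.Connected) {v w : V} (h : v ≠ w) :
    ∃ z, G.Adj v z ∧ G.dist w z + 1 = G.dist w v := by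
  obtain ⟨p, hp⟩ := hG.exists_walk_length_eq_dist v w
  cases p with
  | nil => exact absurd rfl h
  | @cons _ z _ hadj q =>
    refine ⟨z, hadj, ?_⟩
    rw [SimpleGraph.Walk.length_cons] at hp
    have h1 : G.dist z w ≤ q.length := SimpleGraph.dist_le q
    have h2 : G.dist v w ≤ G.dist v z + G.dist z w := hG.dist_triangle
    have h3 : G.dist v z = 1 := SimpleGraph.dist_eq_one_iff_adj.mpr hadj
    have c1 : G.dist w z = G.dist z w := SimpleGraph.dist_comm
    have c2 : G.dist w v = G.dist v w := SimpleGraph.dist_comm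
    omega

lemma exists_maxDistant_aux [Fintype V] (G : SimpleGraph V) (hG : G.Connected) (v u : V) :
    ∃ u', MaxDistant G u' v ∧ G.dist v u' = G.dist v u + G.dist u u' := by
  classical
  obtain ⟨u', hmem, hmax⟩ := Finset.exists_max_image
    (Finset.univ.filter fun x => G.dist v x = G.dist v u + G.dist u x)
    (fun x => G.dist v x) ⟨u, by simp⟩
  simp only [Finset.mem_filter, Finset.mem_univ, true_and] at hmem hmax
  refine ⟨u', ?_, hmem⟩
  intro z hadj
  by_contra hlt
  push_neg at hlt
  have hd1 : G.dist u' z = 1 := SimpleGraph.dist_eq_one_iff_adj.mpr hadj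
  have h1 : G.dist v z ≤ G.dist v u' + G.dist u' z := hG.dist_triangle
  have h2 : G.dist u z ≤ G.dist u u' + G.dist u' z := hG.dist_triangle
  have h3 : G.dist v z ≤ G.dist v u + G.dist u z := hG.dist_triangle
  have hz : G.dist v z = G.dist v u + G.dist u z := by omega
  have := hmax z hz
  omega

lemma resolver_eq_aux (G : SimpleGraph V) (hG : G.Connected) {u v w : V} (hne : u ≠ v)
    (hm : MutuallyMaxDistant G u v) (hw : StronglyResolves G w u v) : w = u ∨ w = v := by
  cases hw with
  | inl h =>
    right
    by_contra hwv
    obtain ⟨z, hadj, hz⟩ := exists_adj_dist_aux G hG (show v ≠ w from fun e => hwv e.symm)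
    have h1 : G.dist w u ≤ G.dist w z + G.dist z u := hG.dist_triangle
    have h2 := hm.2 z hadj
    have c1 : G.dist u z = G.dist z u := SimpleGraph.dist_comm
    have c2 : G.dist u v = G.dist v u := SimpleGraph.dist_comm
    omega
  | inr h =>
    left
    by_contra hwu
    obtain ⟨z, hadj, hz⟩ := exists_adj_dist_aux G hG (show u ≠ w from fun e => hwu e.symm)
    have h1 : G.dist w v ≤ G.dist w z + G.dist z v := hG.dist_triangle
    have h2 := hm.1 z hadj
    have c1 : G.dist v z = G.dist z v := SimpleGraph.dist_comm
    have c2 : G.dist v u = G.dist u v := SimpleGraph.dist_comm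
    omega

lemma key_aux [Fintype V] (G : SimpleGraph V) (hG : G.Connected) (S : Set V) :
    IsStrongResolvingSet G S ↔ _root_.IsVertexCover (strongResolvingGraph G) S := by
  constructor
  · rintro h u v ⟨hne, hm⟩
    obtain ⟨w, hwS, hw⟩ := h u v hne
    rcases resolver_eq_aux G hG hne hm hw with rfl | rfl
    · exact Or.inl hwS
    · exact Or.inr hwS
  · intro h u v hne
    obtain ⟨u', hu'max, hu'⟩ := exists_maxDistant_aux G hG v u
    obtain ⟨v', hv'max, hv'⟩ := exists_maxDistant_aux G hG u' v
    have hpos : 0 < G.dist v u := hG.pos_dist_of_ne (Ne.symm hne)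
    have cB : G.dist u' v = G.dist v u' := SimpleGraph.dist_comm
    have hne' : u' ≠ v' := by
      intro e
      have h0 : G.dist u' v' = 0 := by rw [e]; exact SimpleGraph.dist_self
      omega
    have hmax2 : MaxDistant G u' v' := by
      intro z hadj
      have h1 : G.dist v' z ≤ G.dist v' v + G.dist v z := hG.dist_triangle
      have h2 := hu'max z hadj
      have c1 : G.dist u' v' = G.dist v' u' := SimpleGraph.dist_comm
      have c2 : G.dist v v' = G.dist v' v := SimpleGraph.dist_comm
      omega
    rcases h u' v' ⟨hne', hmax2, hv'max⟩ with hS | hS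
    · refine ⟨u', hS, Or.inr ?_⟩
      have c2 : G.dist u' u = G.dist u u' := SimpleGraph.dist_comm
      have c3 : G.dist u v = G.dist v u := SimpleGraph.dist_comm
      omega
    · refine ⟨v', hS, Or.inl ?_⟩
      have t1 : G.dist u' v' ≤ G.dist u' u + G.dist u v' := hG.dist_triangle
      have t2 : G.dist u v' ≤ G.dist u v + G.dist v v' := hG.dist_triangle
      have c2 : G.dist u' u = G.dist u u' := SimpleGraph.dist_comm
      have g1 : G.dist v' u = G.dist u v' := SimpleGraph.dist_comm
      have g2 : G.dist v' v = G.dist v v' := SimpleGraph.dist_comm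
      have g3 : G.dist v u = G.dist u v := SimpleGraph.dist_comm
      omega

end Aux

theorem stmt0 [Fintype V] (G : SimpleGraph V) (hG : G.Connected) :
    strongMetricDim G = _root_.vertexCoverNum (strongResolvingGraph G) := by
  unfold strongMetricDim _root_.vertexCoverNum
  congr 1
  ext n
  simp only [Set.mem_setOf_eq]
  constructor
  · rintro ⟨S, h1, h2⟩
    exact ⟨S, h1, (key_aux G hG S).mp h2⟩
  · rintro ⟨S, h1, h2⟩
    exact ⟨S, h1, (key_aux G hG S).mpr h2⟩
end

section
/- If G is a connected graph of order n > 3, then the local metric dimension of G equals n−2 if and only if the clique number of G equals n−1. -/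
open SimpleGraph Finset

variable {V : Type*}

lemma aux_dist_two {G : SimpleGraph V} {v b a : V} (hG : G.Connected) (hvb : ¬ G.Adj v b)
    (hne : v ≠ b) (h1 : G.Adj v a) (h2 : G.Adj a b) : G.dist v b = 2 := by
  have hle : G.dist v b ≤ 2 := by
    simpa using SimpleGraph.dist_le (SimpleGraph.Walk.cons h1 (SimpleGraph.Walk.cons h2 SimpleGraph.Walk.nil))
  have h0 : G.dist v b ≠ 0 := (hG.pos_dist_of_ne hne).ne'
  have h1' : G.dist v b ≠ 1 := fun h => hvb ((SimpleGraph.dist_eq_one_iff_adj).mp h)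
  omega

lemma aux_exists_neighbor [Fintype V] {G : SimpleGraph V} (hG : G.Connected)
    (h : 1 < Fintype.card V) (v : V) : ∃ w, G.Adj v w := by
  obtain ⟨u, hu⟩ := Fintype.exists_ne_of_one_lt_card h v
  obtain ⟨p⟩ := hG v u
  cases p with
  | nil => exact absurd rfl hu.symm
  | cons h q => exact ⟨_, h⟩

lemma aux_univ_resolving [Fintype V] {G : SimpleGraph V} (hG : G.Connected) :
    IsLocalResolvingSet G ↑(Finset.univ : Finset V) := by
  intro u v huv
  refine ⟨u, by simp, ?_⟩
  simp only [SimpleGraph.dist_self]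
  exact (hG.pos_dist_of_ne huv.ne.symm).ne

lemma aux_dir2 [Fintype V] {G : SimpleGraph V} (hG : G.Connected)
    (hn : 3 < Fintype.card V) (hcl : G.cliqueNum = Fintype.card V - 1) :
    localMetricDim G = Fintype.card V - 2 := by
  classical
  set n := Fintype.card V with hncard
  obtain ⟨s, hs⟩ := G.exists_isNClique_cliqueNum
  rw [hcl] at hs
  have hsclique := hs.1
  have hscard : s.card = n - 1 := hs.2
  -- the missing vertex
  have hcu : (Finset.univ \ s).card = 1 := by
    rw [Finset.card_sdiff_of_subset (Finset.subset_univ s), Finset.card_univ, hscard]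
    omega
  obtain ⟨v, hv⟩ := Finset.card_eq_one.mp hcu
  have hvs : v ∉ s := by
    have : v ∈ Finset.univ \ s := hv ▸ Finset.mem_singleton_self v
    exact (Finset.mem_sdiff.mp this).2
  have hmem : ∀ x : V, x = v ∨ x ∈ s := by
    intro x
    by_cases h : x ∈ s
    · exact Or.inr h
    · left
      have : x ∈ Finset.univ \ s := Finset.mem_sdiff.mpr ⟨Finset.mem_univ x, h⟩
      rw [hv] at this; exact Finset.mem_singleton.mp this
  have hadj_s : ∀ x ∈ s, ∀ y ∈ s, x ≠ y → G.Adj x y := fun x hx y hy hxy =>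
    hsclique hx hy hxy
  set A : Finset V := s.filter (fun x => G.Adj v x) with hA
  set B : Finset V := s.filter (fun x => ¬ G.Adj v x) with hB
  have hAmem : ∀ x, x ∈ A ↔ x ∈ s ∧ G.Adj v x := by intro x; simp [hA]
  have hBmem : ∀ x, x ∈ B ↔ x ∈ s ∧ ¬ G.Adj v x := by intro x; simp [hB]
  have hABcard : A.card + B.card = n - 1 := by
    rw [hA, hB, Finset.card_filter_add_card_filter_not, hscard]
  have hAne : A.Nonempty := by
    obtain ⟨w, hw⟩ := aux_exists_neighbor hG (by omega) v
    refine ⟨w, (hAmem w).mpr ⟨?_, hw⟩⟩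
    rcases hmem w with h | h
    · exact absurd (h ▸ hw) (G.irrefl)
    · exact h
  have hBne : B.Nonempty := by
    by_contra hB0
    have hall : ∀ x ∈ s, G.Adj v x := by
      intro x hx
      by_contra hng
      exact hB0 ⟨x, (hBmem x).mpr ⟨hx, hng⟩⟩
    have hcliq : G.IsClique (insert v (↑s : Set V)) := by
      intro x hx y hy hxy
      rcases hx with hx | hx <;> rcases hy with hy | hy
      · exact absurd (hx.trans hy.symm) hxy
      · exact hx ▸ hall y hy
      · exact hy ▸ (hall x hx).symm
      · exact hadj_s x hx y hy hxy
    have : (insert v s).card ≤ G.cliqueNum := by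
      have := hcliq
      rw [← Finset.coe_insert] at this
      exact SimpleGraph.IsClique.card_le_cliqueNum (tc := this)
    rw [Finset.card_insert_of_notMem hvs, hscard, hcl] at this
    omega
  -- distance facts
  have hd_a : ∀ a ∈ A, ∀ x : V, x ≠ a → G.dist a x = 1 := by
    intro a ha x hx
    rw [SimpleGraph.dist_eq_one_iff_adj]
    obtain ⟨has, hva⟩ := (hAmem a).mp ha
    rcases hmem x with h | h
    · exact h ▸ hva.symm
    · exact hadj_s a has x h (Ne.symm hx)
  have hd_b : ∀ b ∈ B, ∀ x ∈ s, x ≠ b → G.dist b x = 1 := by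
    intro b hb x hx hxb
    rw [SimpleGraph.dist_eq_one_iff_adj]
    exact hadj_s b ((hBmem b).mp hb).1 x hx (Ne.symm hxb)
  have hd_bv : ∀ b ∈ B, G.dist b v = 2 := by
    intro b hb
    obtain ⟨a, ha⟩ := hAne
    obtain ⟨hbs, hnvb⟩ := (hBmem b).mp hb
    obtain ⟨has, hva⟩ := (hAmem a).mp ha
    have hab : a ≠ b := fun h => hnvb (h ▸ hva)
    rw [SimpleGraph.dist_comm]
    exact aux_dist_two hG hnvb (fun h => hvs (h ▸ hbs)) hva (hadj_s a has b hbs hab)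
  -- upper bound
  obtain ⟨a0, ha0⟩ := hAne
  have hupper : (n - 2) ∈ {m | ∃ S : Finset V, S.card = m ∧ IsLocalResolvingSet G ↑S} := by
    refine ⟨s.erase a0, ?_, ?_⟩
    · rw [Finset.card_erase_of_mem ((hAmem a0).mp ha0).1, hscard]; omega
    · intro x y hxy
      by_cases hxS : x ∈ s.erase a0
      · refine ⟨x, Finset.mem_coe.mpr hxS, ?_⟩
        simp only [SimpleGraph.dist_self]
        exact (hG.pos_dist_of_ne hxy.ne.symm).ne
      by_cases hyS : y ∈ s.erase a0
      · refine ⟨y, Finset.mem_coe.mpr hyS, ?_⟩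
        simp only [SimpleGraph.dist_self]
        exact (hG.pos_dist_of_ne hxy.ne).ne'
      -- both x, y in {v, a0}
      obtain ⟨b0, hb0⟩ := hBne
      have hb0s : b0 ∈ s := ((hBmem b0).mp hb0).1
      have hb0a0 : b0 ≠ a0 := by
        intro h
        exact ((hBmem b0).mp hb0).2 (h ▸ ((hAmem a0).mp ha0).2)
      have hb0S : b0 ∈ s.erase a0 := Finset.mem_erase.mpr ⟨hb0a0, hb0s⟩
      have hx' : x = v ∨ x = a0 := by
        rcases hmem x with h | h
        · exact Or.inl h
        · exact Or.inr (by by_contra hc; exact hxS (Finset.mem_erase.mpr ⟨hc, h⟩))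
      have hy' : y = v ∨ y = a0 := by
        rcases hmem y with h | h
        · exact Or.inl h
        · exact Or.inr (by by_contra hc; exact hyS (Finset.mem_erase.mpr ⟨hc, h⟩))
      have hda : G.dist a0 b0 = 1 := hd_a a0 ha0 b0 hb0a0
      have hdv : G.dist v b0 = 2 := by
        rw [SimpleGraph.dist_comm]; exact hd_bv b0 hb0
      refine ⟨b0, Finset.mem_coe.mpr hb0S, ?_⟩
      rcases hx' with rfl | rfl <;> rcases hy' with rfl | rfl
      · exact absurd rfl hxy.ne
      · rw [hdv, hda]; omega
      · rw [hdv, hda]; omega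
      · exact absurd rfl hxy.ne
  -- lower bound
  have hlower : ∀ m ∈ {m | ∃ S : Finset V, S.card = m ∧ IsLocalResolvingSet G ↑S}, n - 2 ≤ m := by
    rintro m ⟨S, hScard, hres⟩
    subst hScard
    -- claims
    have CA : ((A \ S)).card ≤ 1 := by
      rw [Finset.card_le_one]
      intro a1 h1 a2 h2
      by_contra hne12
      obtain ⟨ha1, ha1S⟩ := Finset.mem_sdiff.mp h1
      obtain ⟨ha2, ha2S⟩ := Finset.mem_sdiff.mp h2
      obtain ⟨x, hxS, hx⟩ := hres a1 a2
        (hadj_s a1 ((hAmem a1).mp ha1).1 a2 ((hAmem a2).mp ha2).1 hne12)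
      rw [Finset.mem_coe] at hxS
      have hx1 : x ≠ a1 := fun h => ha1S (h ▸ hxS)
      have hx2 : x ≠ a2 := fun h => ha2S (h ▸ hxS)
      rw [hd_a a1 ha1 x hx1, hd_a a2 ha2 x hx2] at hx
      exact hx rfl
    have CB : ((B \ S)).card ≤ 1 := by
      rw [Finset.card_le_one]
      intro b1 h1 b2 h2
      by_contra hne12
      obtain ⟨hb1, hb1S⟩ := Finset.mem_sdiff.mp h1
      obtain ⟨hb2, hb2S⟩ := Finset.mem_sdiff.mp h2
      obtain ⟨x, hxS, hx⟩ := hres b1 b2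
        (hadj_s b1 ((hBmem b1).mp hb1).1 b2 ((hBmem b2).mp hb2).1 hne12)
      rw [Finset.mem_coe] at hxS
      have hx1 : x ≠ b1 := fun h => hb1S (h ▸ hxS)
      have hx2 : x ≠ b2 := fun h => hb2S (h ▸ hxS)
      rcases hmem x with h | hxs
      · rw [h, hd_bv b1 hb1, hd_bv b2 hb2] at hx
        exact hx rfl
      · rw [hd_b b1 hb1 x hxs hx1, hd_b b2 hb2 x hxs hx2] at hx
        exact hx rfl
    by_cases hvS : v ∈ S
    · -- S ⊇ (A ∩ S) ∪ (B ∩ S) ∪ {v}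
      have h1 : (A ∩ S).card + (A \ S).card = A.card := Finset.card_inter_add_card_sdiff A S
      have h2 : (B ∩ S).card + (B \ S).card = B.card := Finset.card_inter_add_card_sdiff B S
      have hsub : (A ∩ S) ∪ (B ∩ S) ∪ {v} ⊆ S := by
        intro x hx
        rcases Finset.mem_union.mp hx with hx | hx
        · rcases Finset.mem_union.mp hx with hx | hx
          · exact (Finset.mem_inter.mp hx).2
          · exact (Finset.mem_inter.mp hx).2
        · exact (Finset.mem_singleton.mp hx) ▸ hvS
      have hdisj1 : Disjoint (A ∩ S) (B ∩ S) := by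
        rw [Finset.disjoint_left]
        intro x hx1 hx2
        exact ((hBmem x).mp (Finset.mem_inter.mp hx2).1).2 ((hAmem x).mp (Finset.mem_inter.mp hx1).1).2
      have hdisj2 : Disjoint ((A ∩ S) ∪ (B ∩ S)) ({v} : Finset V) := by
        rw [Finset.disjoint_right]
        intro x hx1 hx2
        rw [Finset.mem_singleton] at hx1
        rw [hx1] at hx2
        rcases Finset.mem_union.mp hx2 with hx | hx
        · exact hvs ((hAmem v).mp (Finset.mem_inter.mp hx).1).1
        · exact hvs ((hBmem v).mp (Finset.mem_inter.mp hx).1).1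
      have hcard := Finset.card_le_card hsub
      rw [Finset.card_union_of_disjoint hdisj2, Finset.card_union_of_disjoint hdisj1,
        Finset.card_singleton] at hcard
      omega
    · -- v ∉ S
      by_cases hAS : A ⊆ S
      · have h2 : (B ∩ S).card + (B \ S).card = B.card := Finset.card_inter_add_card_sdiff B S
        have hsub : A ∪ (B ∩ S) ⊆ S := by
          intro x hx
          rcases Finset.mem_union.mp hx with hx | hx
          · exact hAS hx
          · exact (Finset.mem_inter.mp hx).2
        have hdisj : Disjoint A (B ∩ S) := by
          rw [Finset.disjoint_left]
          intro x hx1 hx2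
          exact ((hBmem x).mp (Finset.mem_inter.mp hx2).1).2 ((hAmem x).mp hx1).2
        have hcard := Finset.card_le_card hsub
        rw [Finset.card_union_of_disjoint hdisj] at hcard
        omega
      · -- ∃ a ∈ A \ S; then B ⊆ S
        obtain ⟨a, haA, haS⟩ := Finset.not_subset.mp hAS
        have hBS : B ⊆ S := by
          intro b hbB
          by_contra hbS
          have hab : a ≠ b := fun h => ((hBmem b).mp hbB).2 (h ▸ ((hAmem a).mp haA).2)
          obtain ⟨x, hxS, hx⟩ := hres a b
            (hadj_s a ((hAmem a).mp haA).1 b ((hBmem b).mp hbB).1 hab)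
          rw [Finset.mem_coe] at hxS
          have hxa : x ≠ a := fun h => haS (h ▸ hxS)
          have hxb : x ≠ b := fun h => hbS (h ▸ hxS)
          have hxv : x ≠ v := fun h => hvS (h ▸ hxS)
          have hxs : x ∈ s := (hmem x).resolve_left hxv
          rw [hd_a a haA x hxa, hd_b b hbB x hxs hxb] at hx
          exact hx rfl
        have h1 : (A ∩ S).card + (A \ S).card = A.card := Finset.card_inter_add_card_sdiff A S
        have hsub : (A ∩ S) ∪ B ⊆ S := by
          intro x hx
          rcases Finset.mem_union.mp hx with hx | hx
          · exact (Finset.mem_inter.mp hx).2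
          · exact hBS hx
        have hdisj : Disjoint (A ∩ S) B := by
          rw [Finset.disjoint_left]
          intro x hx1 hx2
          exact ((hBmem x).mp hx2).2 ((hAmem x).mp (Finset.mem_inter.mp hx1).1).2
        have hcard := Finset.card_le_card hsub
        rw [Finset.card_union_of_disjoint hdisj] at hcard
        omega
  refine le_antisymm (Nat.sInf_le hupper) (le_csInf ⟨_, hupper⟩ hlower)

lemma aux_dir1 [Fintype V] {G : SimpleGraph V} (hG : G.Connected)
    (hn : 3 < Fintype.card V) (hdim : localMetricDim G = Fintype.card V - 2) :
    G.cliqueNum = Fintype.card V - 1 := by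
  classical
  set n := Fintype.card V with hncard
  have hLne : {m | ∃ S : Finset V, S.card = m ∧ IsLocalResolvingSet G ↑S}.Nonempty :=
    ⟨n, Finset.univ, by rw [Finset.card_univ], aux_univ_resolving hG⟩
  have hS2 := Nat.sInf_mem hLne
  rw [show sInf {m | ∃ S : Finset V, S.card = m ∧ IsLocalResolvingSet G ↑S} = localMetricDim G from rfl, hdim] at hS2
  obtain ⟨S2, hS2card, hS2res⟩ := hS2
  have hno3 : ∀ S : Finset V, S.card = n - 3 → ¬IsLocalResolvingSet G ↑S := by
    intro S hcard hres
    have hle : localMetricDim G ≤ n - 3 := Nat.sInf_le ⟨S, hcard, hres⟩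
    rw [hdim] at hle
    omega
  -- G is not complete
  have hnotcomp : ∃ u v : V, u ≠ v ∧ ¬ G.Adj u v := by
    by_contra hcomp
    push_neg at hcomp
    have hcu : (Finset.univ \ S2).card = 2 := by
      rw [Finset.card_sdiff_of_subset (Finset.subset_univ S2), Finset.card_univ, hS2card]
      omega
    obtain ⟨u, v, huv, hpair⟩ := Finset.card_eq_two.mp hcu
    have hu : u ∉ S2 := by
      have : u ∈ Finset.univ \ S2 := by rw [hpair]; simp
      exact (Finset.mem_sdiff.mp this).2
    have hv : v ∉ S2 := by
      have : v ∈ Finset.univ \ S2 := by rw [hpair]; simp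
      exact (Finset.mem_sdiff.mp this).2
    obtain ⟨x, hxS, hx⟩ := hS2res u v (hcomp u v huv)
    rw [Finset.mem_coe] at hxS
    have hxu : x ≠ u := fun h => hu (h ▸ hxS)
    have hxv : x ≠ v := fun h => hv (h ▸ hxS)
    rw [SimpleGraph.dist_eq_one_iff_adj.mpr (hcomp u x (Ne.symm hxu)),
      SimpleGraph.dist_eq_one_iff_adj.mpr (hcomp v x (Ne.symm hxv))] at hx
    exact hx rfl
  obtain ⟨u, v, huv, hnadj⟩ := hnotcomp
  -- the key dichotomy
  set PP : V → Prop := fun w => G.Adj u w ∧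
    ∀ z, z ≠ u → z ≠ v → z ≠ w → G.dist u z = G.dist w z with hPPdef
  set QQ : V → Prop := fun w => G.Adj v w ∧
    ∀ z, z ≠ u → z ≠ v → z ≠ w → G.dist v z = G.dist w z with hQQdef
  have hP : ∀ w, w ≠ u → w ≠ v → PP w ∨ QQ w := by
    intro w hwu hwv
    set S : Finset V := Finset.univ \ {u, v, w} with hSdef
    have hmemS : ∀ z, z ∈ S ↔ z ≠ u ∧ z ≠ v ∧ z ≠ w := by
      intro z; simp [hSdef]
    have hScard : S.card = n - 3 := by
      rw [hSdef, Finset.card_sdiff_of_subset (Finset.subset_univ _), Finset.card_univ]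
      have h3 : ({u, v, w} : Finset V).card = 3 :=
        Finset.card_eq_three.mpr ⟨u, v, w, huv, Ne.symm hwu, Ne.symm hwv, rfl⟩
      rw [h3]
    have hnres := hno3 S hScard
    rw [IsLocalResolvingSet] at hnres
    push_neg at hnres
    obtain ⟨x, y, hxy, hall⟩ := hnres
    have hall' : ∀ z, z ≠ u → z ≠ v → z ≠ w → G.dist x z = G.dist y z := by
      intro z h1 h2 h3
      exact hall z (Finset.mem_coe.mpr ((hmemS z).mpr ⟨h1, h2, h3⟩))
    have hxT : x = u ∨ x = v ∨ x = w := by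
      by_contra hc
      push_neg at hc
      have := hall' x hc.1 hc.2.1 hc.2.2
      rw [SimpleGraph.dist_self] at this
      exact (hG.pos_dist_of_ne hxy.ne.symm).ne this
    have hyT : y = u ∨ y = v ∨ y = w := by
      by_contra hc
      push_neg at hc
      have := hall' y hc.1 hc.2.1 hc.2.2
      rw [SimpleGraph.dist_self] at this
      exact (hG.pos_dist_of_ne hxy.ne).ne' this
    rcases hxT with rfl | rfl | rfl <;> rcases hyT with rfl | rfl | rfl
    · exact absurd rfl hxy.ne
    · exact absurd hxy hnadj
    · exact Or.inl ⟨hxy, hall'⟩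
    · exact absurd hxy.symm hnadj
    · exact absurd rfl hxy.ne
    · exact Or.inr ⟨hxy, hall'⟩
    · exact Or.inl ⟨hxy.symm, fun z h1 h2 h3 => (hall' z h1 h2 h3).symm⟩
    · exact Or.inr ⟨hxy.symm, fun z h1 h2 h3 => (hall' z h1 h2 h3).symm⟩
    · exact absurd rfl hxy.ne
  -- basic consequences
  have hPP_adj : ∀ a b, a ≠ u → a ≠ v → b ≠ u → b ≠ v → a ≠ b → PP a → PP b → G.Adj a b := by
    intro a b hau hav hbu hbv hab hPa hPb
    have hd := hPa.2 b hbu hbv (Ne.symm hab)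
    rw [← SimpleGraph.dist_eq_one_iff_adj, ← hd, SimpleGraph.dist_eq_one_iff_adj]
    exact hPb.1
  have hQQ_adj : ∀ a b, a ≠ u → a ≠ v → b ≠ u → b ≠ v → a ≠ b → QQ a → QQ b → G.Adj a b := by
    intro a b hau hav hbu hbv hab hQa hQb
    have hd := hQa.2 b hbu hbv (Ne.symm hab)
    rw [← SimpleGraph.dist_eq_one_iff_adj, ← hd, SimpleGraph.dist_eq_one_iff_adj]
    exact hQb.1
  have cross1 : ∀ a b, a ≠ u → a ≠ v → b ≠ u → b ≠ v → a ≠ b → PP a → QQ b →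
      (G.Adj a b ↔ G.Adj u b) := by
    intro a b hau hav hbu hbv hab hPa hQb
    have hd := hPa.2 b hbu hbv (Ne.symm hab)
    rw [← SimpleGraph.dist_eq_one_iff_adj, ← SimpleGraph.dist_eq_one_iff_adj, hd]
  have cross2 : ∀ a b, a ≠ u → a ≠ v → b ≠ u → b ≠ v → a ≠ b → PP a → QQ b →
      (G.Adj a b ↔ G.Adj v a) := by
    intro a b hau hav hbu hbv hab hPa hQb
    have hd := hQb.2 a hau hav hab
    rw [← SimpleGraph.dist_eq_one_iff_adj (u := a) (v := b),
      ← SimpleGraph.dist_eq_one_iff_adj (u := v) (v := a), hd, SimpleGraph.dist_comm]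
  -- produce a clique of size n - 1, then conclude
  have hconcl : ∀ (x0 : V) (C : Finset V), C = Finset.univ.erase x0 → G.IsClique ↑C →
      G.cliqueNum = n - 1 := by
    intro x0 C hC hclique
    have hcard : C.card = n - 1 := by
      rw [hC, Finset.card_erase_of_mem (Finset.mem_univ x0), Finset.card_univ]
    have hge : n - 1 ≤ G.cliqueNum := by
      have := SimpleGraph.IsClique.card_le_cliqueNum (tc := hclique)
      omega
    have hle : G.cliqueNum ≤ n - 1 := by
      by_contra hc
      push_neg at hc
      obtain ⟨t, ht⟩ := G.exists_isNClique_cliqueNum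
      have htcard : t.card = G.cliqueNum := ht.2
      have htn : t.card ≤ n := le_of_le_of_eq (Finset.card_le_univ t) hncard.symm
      have hteq : t.card = n := by omega
      have : t = Finset.univ := Finset.eq_univ_of_card t (by rw [hteq])
      have hadjuv : G.Adj u v := ht.1 (by rw [this]; exact Finset.mem_coe.mpr (Finset.mem_univ u))
        (by rw [this]; exact Finset.mem_coe.mpr (Finset.mem_univ v)) huv
      exact hnadj hadjuv
    omega
  by_cases hPall : ∀ w, w ≠ u → w ≠ v → PP w
  · refine hconcl v (Finset.univ.erase v) rfl ?_
    intro x hx y hy hxy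
    rw [Finset.mem_coe, Finset.mem_erase] at hx hy
    by_cases hxu : x = u
    · by_cases hyu : y = u
      · exact absurd (hxu.trans hyu.symm) hxy
      · exact hxu ▸ (hPall y hyu hy.1).1
    · by_cases hyu : y = u
      · exact hyu ▸ ((hPall x hxu hx.1).1).symm
      · exact hPP_adj x y hxu hx.1 hyu hy.1 hxy (hPall x hxu hx.1) (hPall y hyu hy.1)
  · push_neg at hPall
    obtain ⟨b0, hb0u, hb0v, hb0P⟩ := hPall
    have hQb0 : QQ b0 := (hP b0 hb0u hb0v).resolve_left hb0P
    by_cases hQall : ∀ w, w ≠ u → w ≠ v → QQ w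
    · refine hconcl u (Finset.univ.erase u) rfl ?_
      intro x hx y hy hxy
      rw [Finset.mem_coe, Finset.mem_erase] at hx hy
      by_cases hxv : x = v
      · by_cases hyv : y = v
        · exact absurd (hxv.trans hyv.symm) hxy
        · exact hxv ▸ (hQall y hy.1 hyv).1
      · by_cases hyv : y = v
        · exact hyv ▸ ((hQall x hx.1 hxv).1).symm
        · exact hQQ_adj x y hx.1 hxv hy.1 hyv hxy (hQall x hx.1 hxv) (hQall y hy.1 hyv)
    · push_neg at hQall
      obtain ⟨a0, ha0u, ha0v, ha0Q⟩ := hQall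
      have hPa0 : PP a0 := (hP a0 ha0u ha0v).resolve_right ha0Q
      have ha0b0 : a0 ≠ b0 := fun h => ha0Q (h ▸ hQb0)
      by_cases hE : G.Adj a0 b0
      · -- all cross edges present; univ.erase v is a clique
        have hva0 : G.Adj v a0 :=
          (cross2 a0 b0 ha0u ha0v hb0u hb0v ha0b0 hPa0 hQb0).mp hE
        have key : ∀ y, y ≠ u → y ≠ v → ¬ PP y → G.Adj u y := by
          intro y hyu hyv hyP
          have hQy : QQ y := (hP y hyu hyv).resolve_left hyP
          have ha0y : a0 ≠ y := fun h => hyP (h ▸ hPa0)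
          have hadj_a0y : G.Adj a0 y :=
            (cross2 a0 y ha0u ha0v hyu hyv ha0y hPa0 hQy).mpr hva0
          exact (cross1 a0 y ha0u ha0v hyu hyv ha0y hPa0 hQy).mp hadj_a0y
        have keyadj : ∀ x y, x ≠ u → x ≠ v → y ≠ u → y ≠ v → x ≠ y → G.Adj x y := by
          intro x y hxu hxv hyu hyv hxy
          by_cases hPx : PP x
          · by_cases hPy : PP y
            · exact hPP_adj x y hxu hxv hyu hyv hxy hPx hPy
            · have hQy : QQ y := (hP y hyu hyv).resolve_left hPy
              exact (cross1 x y hxu hxv hyu hyv hxy hPx hQy).mpr (key y hyu hyv hPy)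
          · by_cases hPy : PP y
            · have hQx : QQ x := (hP x hxu hxv).resolve_left hPx
              exact ((cross1 y x hyu hyv hxu hxv (Ne.symm hxy) hPy hQx).mpr
                (key x hxu hxv hPx)).symm
            · have hQx : QQ x := (hP x hxu hxv).resolve_left hPx
              have hQy : QQ y := (hP y hyu hyv).resolve_left hPy
              exact hQQ_adj x y hxu hxv hyu hyv hxy hQx hQy
        refine hconcl v (Finset.univ.erase v) rfl ?_
        intro x hx y hy hxy
        rw [Finset.mem_coe, Finset.mem_erase] at hx hy
        by_cases hxu : x = u
        · by_cases hyu : y = u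
          · exact absurd (hxu.trans hyu.symm) hxy
          · by_cases hPy : PP y
            · exact hxu ▸ hPy.1
            · exact hxu ▸ key y hyu hy.1 hPy
        · by_cases hyu : y = u
          · by_cases hPx : PP x
            · exact hyu ▸ hPx.1.symm
            · exact hyu ▸ (key x hxu hx.1 hPx).symm
          · exact keyadj x y hxu hx.1 hyu hy.1 hxy
      · -- no cross edge: contradiction with connectedness
        exfalso
        have hnva0 : ¬ G.Adj v a0 := fun h =>
          hE ((cross2 a0 b0 ha0u ha0v hb0u hb0v ha0b0 hPa0 hQb0).mpr h)
        have hnub0 : ¬ G.Adj u b0 := fun h =>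
          hE ((cross1 a0 b0 ha0u ha0v hb0u hb0v ha0b0 hPa0 hQb0).mpr h)
        set C1 : V → Prop := fun x => x = u ∨ (x ≠ u ∧ x ≠ v ∧ PP x) with hC1def
        have hclosed : ∀ x y, C1 x → G.Adj x y → C1 y := by
          intro x y hx hxy
          by_cases hyu : y = u
          · exact Or.inl hyu
          by_cases hyv : y = v
          · exfalso
            rcases hx with rfl | ⟨hxu, hxv, hPx⟩
            · exact hnadj (hyv ▸ hxy)
            · -- x with PP x adjacent to v: contradiction
              have hxb0 : x ≠ b0 := fun h => hb0P (h ▸ hPx)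
              have h1 : ¬ G.Adj x b0 := fun h =>
                hnub0 ((cross1 x b0 hxu hxv hb0u hb0v hxb0 hPx hQb0).mp h)
              have h2 : G.Adj v x := hyv ▸ hxy.symm
              exact h1 ((cross2 x b0 hxu hxv hb0u hb0v hxb0 hPx hQb0).mpr h2)
          by_cases hPy : PP y
          · exact Or.inr ⟨hyu, hyv, hPy⟩
          · exfalso
            have hQy : QQ y := (hP y hyu hyv).resolve_left hPy
            have hnuy : ¬ G.Adj u y := by
              intro h
              have ha0y : a0 ≠ y := fun hh => hPy (hh ▸ hPa0)
              have := (cross1 a0 y ha0u ha0v hyu hyv ha0y hPa0 hQy).mpr h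
              exact hnva0 ((cross2 a0 y ha0u ha0v hyu hyv ha0y hPa0 hQy).mp this)
            rcases hx with rfl | ⟨hxu, hxv, hPx⟩
            · exact hnuy hxy
            · have hxy' : x ≠ y := hxy.ne
              exact hnuy ((cross1 x y hxu hxv hyu hyv hxy' hPx hQy).mp hxy)
        have hreach : ∀ (x y : V), G.Walk x y → C1 x → C1 y := by
          intro x y p
          induction p with
          | nil => exact id
          | cons h q ih => exact fun hx => ih (hclosed _ _ hx h)
        obtain ⟨p⟩ := hG u v
        have hC1v : C1 v := hreach u v p (Or.inl rfl)
        rcases hC1v with h | ⟨_, h, _⟩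
        · exact huv h.symm
        · exact h rfl

theorem stmt4 [Fintype V] (G : SimpleGraph V) (hG : G.Connected)
    (hn : 3 < Fintype.card V) :
    localMetricDim G = Fintype.card V - 2 ↔ G.cliqueNum = Fintype.card V - 1 :=
  ⟨aux_dir1 hG hn, aux_dir2 hG hn⟩
end

section
/- A connected graph G of order n ≥ 2 has local metric dimension n−1 if and only if G is the complete graph on n vertices. -/
open SimpleGraph Finset

variable {V : Type*}

theorem stmt5 [Fintype V] (G : SimpleGraph V) (hG : G.Connected)
    (hn : 2 ≤ Fintype.card V) :
    localMetricDim G = Fintype.card V - 1 ↔ G = ⊤ := by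
  classical
  constructor
  · intro hdim
    by_contra hne
    -- there exist nonadjacent distinct vertices u, v
    obtain ⟨u, v, huv, hnadj⟩ : ∃ u v : V, u ≠ v ∧ ¬ G.Adj u v := by
      by_contra h
      push_neg at h
      apply hne
      ext x y
      simp only [SimpleGraph.top_adj]
      exact ⟨fun hxy => hxy.ne, fun hxy => h x y hxy⟩
    -- S = univ \ {u, v} is a local resolving set of size n - 2
    set S : Finset V := Finset.univ \ {u, v} with hS
    have hres : IsLocalResolvingSet G ↑S := by
      intro x y hxy
      by_cases hx : x ∈ ({u, v} : Finset V)
      · -- then y ∉ {u, v} since u, v nonadjacent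
        have hy : y ∉ ({u, v} : Finset V) := by
          intro hy
          simp only [Finset.mem_insert, Finset.mem_singleton] at hx hy
          rcases hx with rfl | rfl <;> rcases hy with rfl | rfl
          · exact (G.loopless.irrefl _ hxy)
          · exact hnadj hxy
          · exact hnadj hxy.symm
          · exact (G.loopless.irrefl _ hxy)
        refine ⟨y, by simpa [hS, not_or] using hy, ?_⟩
        have h1 : G.dist y y = 0 := SimpleGraph.dist_self
        have h2 : 0 < G.dist x y := hG.pos_dist_of_ne hxy.ne
        omega
      · refine ⟨x, by simpa [hS, not_or] using hx, ?_⟩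
        have h1 : G.dist x x = 0 := SimpleGraph.dist_self
        have h2 : 0 < G.dist y x := hG.pos_dist_of_ne hxy.ne.symm
        omega
    have hcard : S.card = Fintype.card V - 2 := by
      rw [hS, Finset.card_sdiff_of_subset (by simp)]
      simp [Finset.card_insert_of_notMem, huv, Finset.card_univ]
    have hle : localMetricDim G ≤ Fintype.card V - 2 :=
      Nat.sInf_le ⟨S, hcard, hres⟩
    omega
  · intro hG'
    subst hG'
    have hdist : ∀ x y : V, x ≠ y → (⊤ : SimpleGraph V).dist x y = 1 := by
      intro x y hxy
      rw [SimpleGraph.dist_eq_one_iff_adj]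
      exact hxy
    -- membership: univ \ {v0} is a local resolving set
    obtain ⟨v0⟩ : Nonempty V := Fintype.card_pos_iff.mp (by omega)
    have hmem : (Fintype.card V - 1) ∈
        {n | ∃ S : Finset V, S.card = n ∧ IsLocalResolvingSet (⊤ : SimpleGraph V) ↑S} := by
      refine ⟨Finset.univ \ {v0}, ?_, ?_⟩
      · rw [Finset.card_sdiff_of_subset (by simp)]; simp [Finset.card_univ]
      · intro x y hxy
        by_cases hx : x = v0
        · refine ⟨y, by simp [hx ▸ hxy.ne'], ?_⟩
          rw [SimpleGraph.dist_self, hdist x y hxy.ne]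
          omega
        · refine ⟨x, by simp [hx], ?_⟩
          rw [SimpleGraph.dist_self, hdist y x hxy.ne.symm]
          omega
    refine le_antisymm (Nat.sInf_le hmem) (le_csInf ⟨_, hmem⟩ ?_)
    rintro m ⟨S, hScard, hSres⟩
    by_contra hlt
    push_neg at hlt
    -- S.card < n - 1, so complement has ≥ 2 elements
    have h2 : 1 < (Finset.univ \ S).card := by
      rw [Finset.card_sdiff_of_subset (Finset.subset_univ S), Finset.card_univ]
      omega
    obtain ⟨x, hx, y, hy, hxy⟩ := Finset.one_lt_card.mp h2
    simp only [Finset.mem_sdiff, Finset.mem_univ, true_and] at hx hy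
    obtain ⟨w, hw, hwdist⟩ := hSres x y (by exact hxy)
    apply hwdist
    have hwx : w ≠ x := fun h => hx (h ▸ hw)
    have hwy : w ≠ y := fun h => hy (h ▸ hw)
    rw [hdist x w hwx.symm, hdist y w hwy.symm]
end

section
/- For any cycle C_n with n odd and any k with 1 ≤ k ≤ n−1, the k-metric dimension of C_n equals k+1. -/
open SimpleGraph Finset

variable {V : Type*}

namespace CycAux

open scoped Fin.CommRing Fin.NatCast

variable {n : ℕ}

lemma val_one' (hn : 2 ≤ n) [NeZero n] : (1 : Fin n).val = 1 := by
  rw [Fin.val_one']; exact Nat.mod_eq_of_lt (by omega)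

lemma neg_val [NeZero n] (a : Fin n) : (-a).val = (n - a.val) % n := rfl

lemma cyc_connected (hn : 2 ≤ n) : (cycleGraph n).Connected := by
  obtain ⟨m, rfl⟩ : ∃ m, n = m + 1 := ⟨n - 1, by omega⟩
  exact cycleGraph_connected

lemma adj_succ (hn : 2 ≤ n) [NeZero n] (u : Fin n) : (cycleGraph n).Adj u (u + 1) := by
  rw [cycleGraph_adj']
  right
  rw [add_sub_cancel_left, val_one' hn]

lemma dist_le_cast (hn : 2 ≤ n) [NeZero n] :
    ∀ (m : ℕ) (u : Fin n), (cycleGraph n).dist u (u + (m : Fin n)) ≤ m := by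
  intro m
  induction m with
  | zero => intro u; simp
  | succ m ih =>
    intro u
    have h1 : (cycleGraph n).dist u (u + 1) ≤ 1 := by
      have := SimpleGraph.dist_le (Walk.cons (adj_succ hn u) Walk.nil)
      simpa using this
    have h2 := ih (u + 1)
    have he : (u + 1) + (m : Fin n) = u + ((m + 1 : ℕ) : Fin n) := by push_cast; ring
    rw [he] at h2
    have h3 := (cyc_connected hn).dist_triangle
      (u := u) (v := u + 1) (w := u + ((m + 1 : ℕ) : Fin n))
    omega

lemma dist_le_min (hn : 2 ≤ n) [NeZero n] (u v : Fin n) :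
    (cycleGraph n).dist u v ≤ min (v - u).val (u - v).val := by
  have e1 : u + (((v - u).val : ℕ) : Fin n) = v := by
    rw [Fin.cast_val_eq_self]; ring
  have e2 : v + (((u - v).val : ℕ) : Fin n) = u := by
    rw [Fin.cast_val_eq_self]; ring
  have h1 := dist_le_cast hn (v - u).val u
  have h2 := dist_le_cast hn (u - v).val v
  rw [e1] at h1
  rw [e2] at h2
  rw [SimpleGraph.dist_comm] at h2
  exact le_min h1 h2

lemma step (hn : 2 ≤ n) [NeZero n] (a : Fin n) :
    min ((a + 1 : Fin n)).val ((-(a + 1) : Fin n)).val ≤ min a.val ((-a : Fin n)).val + 1 := by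
  have ha : a.val < n := a.isLt
  have h1 : (a + 1 : Fin n).val = (a.val + 1) % n := by
    rw [Fin.add_def, val_one' hn]
  have h3 : (-a : Fin n).val = (n - a.val) % n := neg_val a
  rcases Nat.eq_or_lt_of_le (Nat.succ_le_of_lt ha) with hc | hc
  · rw [show a.val + 1 = n by omega, Nat.mod_self] at h1
    simp [h1]
  · have h1' : (a + 1 : Fin n).val = a.val + 1 := by rw [h1, Nat.mod_eq_of_lt hc]
    have h2' : (-(a + 1) : Fin n).val = n - (a.val + 1) := by
      rw [neg_val, h1', Nat.mod_eq_of_lt (by omega)]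
    by_cases h0 : a.val = 0
    · have h3' : (-a : Fin n).val = 0 := by rw [h3, h0, Nat.sub_zero, Nat.mod_self]
      omega
    · have h3' : (-a : Fin n).val = n - a.val := by rw [h3, Nat.mod_eq_of_lt (by omega)]
      omega

lemma walk_ge (hn : 2 ≤ n) [NeZero n] {u v : Fin n} (p : (cycleGraph n).Walk u v) :
    min (v - u).val (u - v).val ≤ p.length := by
  induction p with
  | nil => simp
  | @cons u x v h p ih =>
    rw [cycleGraph_adj'] at h
    rw [Walk.length_cons]
    have key : min (v - u).val (u - v).val ≤ min (v - x).val (x - v).val + 1 := by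
      rcases h with h | h
      swap
      · have hx : x - u = 1 := Fin.val_injective (h.trans (val_one' hn).symm)
        have e1 : v - u = (v - x) + 1 := by rw [← hx]; ring
        have e2 : u - v = -((v - x) + 1) := by rw [← hx]; ring
        have e3 : x - v = -(v - x) := by ring
        rw [e1, e2, e3]
        exact step hn (v - x)
      case inl =>
        have hx : u - x = 1 := Fin.val_injective (h.trans (val_one' hn).symm)
        have e1 : u - v = (x - v) + 1 := by rw [← hx]; ring
        have e2 : v - u = -((x - v) + 1) := by rw [← hx]; ring
        have e4 : v - x = -(x - v) := by ring
        rw [e1, e2, e4]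
        have := step hn (x - v)
        omega
    omega

lemma cycle_dist (hn : 2 ≤ n) [NeZero n] (u v : Fin n) :
    (cycleGraph n).dist u v = min (v - u).val (u - v).val := by
  refine le_antisymm (dist_le_min hn u v) ?_
  obtain ⟨p, hp⟩ := (cyc_connected hn).exists_walk_length_eq_dist u v
  rw [← hp]
  exact walk_ge hn p

lemma equi_unique (hn : 3 ≤ n) (hodd : Odd n) [NeZero n] {x y w₁ w₂ : Fin n}
    (hxy : x ≠ y)
    (h1 : (cycleGraph n).dist x w₁ = (cycleGraph n).dist y w₁)
    (h2 : (cycleGraph n).dist x w₂ = (cycleGraph n).dist y w₂) : w₁ = w₂ := by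
  have hn2 : 2 ≤ n := by omega
  have key : ∀ w : Fin n, (cycleGraph n).dist x w = (cycleGraph n).dist y w →
      w + w = x + y := by
    intro w hw
    rw [cycle_dist hn2, cycle_dist hn2] at hw
    have hxw : x - w = -(w - x) := by ring
    have hyw : y - w = -(w - y) := by ring
    rw [hxw, hyw] at hw
    have hab : w - x ≠ w - y := fun hh => hxy (sub_right_injective hh)
    have hvals : (w - x).val ≠ (w - y).val := fun hh => hab (Fin.val_injective hh)
    have hA : (w - x).val < n := (w - x).isLt
    have hB : (w - y).val < n := (w - y).isLt
    have hsum : (w - x).val + (w - y).val = n := by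
      have e1 : (-(w - x) : Fin n).val = (n - (w - x).val) % n := neg_val _
      have e2 : (-(w - y) : Fin n).val = (n - (w - y).val) % n := neg_val _
      by_cases h0a : (w - x).val = 0 <;> by_cases h0b : (w - y).val = 0
      · omega
      · rw [h0a, Nat.sub_zero, Nat.mod_self] at e1
        rw [Nat.mod_eq_of_lt (by omega)] at e2
        omega
      · rw [h0b, Nat.sub_zero, Nat.mod_self] at e2
        rw [Nat.mod_eq_of_lt (by omega)] at e1
        omega
      · rw [Nat.mod_eq_of_lt (by omega)] at e1
        rw [Nat.mod_eq_of_lt (by omega)] at e2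
        omega
    have hz : (w - x) + (w - y) = 0 := by
      apply Fin.val_injective
      rw [Fin.add_def]
      simp [hsum]
    linear_combination hz
  have e1 := key w₁ h1
  have e2 := key w₂ h2
  have h3 : (w₁ - w₂) + (w₁ - w₂) = 0 := by linear_combination e1 - e2
  have hc : (w₁ - w₂ : Fin n).val = 0 := by
    have hcv := congrArg Fin.val h3
    rw [Fin.add_def] at hcv
    simp only [Fin.val_zero] at hcv
    have hlt : (w₁ - w₂ : Fin n).val < n := (w₁ - w₂).isLt
    obtain ⟨t, ht⟩ := hodd
    rcases Nat.lt_or_ge ((w₁ - w₂ : Fin n).val + (w₁ - w₂ : Fin n).val) n with hs | hs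
    · rw [Nat.mod_eq_of_lt hs] at hcv; omega
    · rw [Nat.mod_eq_sub_mod hs, Nat.mod_eq_of_lt (by omega)] at hcv
      omega
  have : w₁ - w₂ = 0 := Fin.val_injective (by rw [hc]; simp)
  exact sub_eq_zero.mp this

end CycAux


open scoped Fin.CommRing Fin.NatCast in
theorem stmt12 (n k : ℕ) (hn : 3 ≤ n) (hodd : Odd n) (hk1 : 1 ≤ k) (hk2 : k ≤ n - 1) :
    kMetricDim (cycleGraph n) k = k + 1 := by
  haveI : NeZero n := ⟨by omega⟩
  have hn2 : 2 ≤ n := by omega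
  obtain ⟨S, -, hScard⟩ := Finset.exists_subset_card_eq
    (s := (Finset.univ : Finset (Fin n))) (n := k + 1)
    (by rw [Finset.card_univ, Fintype.card_fin]; omega)
  have hres : IsKResolvingSet (cycleGraph n) k S := by
    intro x y hxy
    have hcard1 : (S.filter fun w =>
        ¬ ((cycleGraph n).dist x w ≠ (cycleGraph n).dist y w)).card ≤ 1 := by
      rw [Finset.card_le_one]
      intro a ha b hb
      simp only [Finset.mem_filter, not_not] at ha hb
      exact CycAux.equi_unique hn hodd hxy ha.2 hb.2
    have hsub : S ⊆ (S.filter fun w => (cycleGraph n).dist x w ≠ (cycleGraph n).dist y w) ∪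
        (S.filter fun w => ¬ ((cycleGraph n).dist x w ≠ (cycleGraph n).dist y w)) := by
      intro w hw
      by_cases h : (cycleGraph n).dist x w ≠ (cycleGraph n).dist y w
      · exact Finset.mem_union_left _ (Finset.mem_filter.mpr ⟨hw, h⟩)
      · exact Finset.mem_union_right _ (Finset.mem_filter.mpr ⟨hw, h⟩)
    have h1 := Finset.card_le_card hsub
    have h2 := Finset.card_union_le
      (S.filter fun w => (cycleGraph n).dist x w ≠ (cycleGraph n).dist y w)
      (S.filter fun w => ¬ ((cycleGraph n).dist x w ≠ (cycleGraph n).dist y w))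
    omega
  have hlow : ∀ m ∈ {m | ∃ T : Finset (Fin n), T.card = m ∧ IsKResolvingSet (cycleGraph n) k T},
      k + 1 ≤ m := by
    rintro m ⟨T, hTcard, hT⟩
    rcases Finset.eq_empty_or_nonempty T with rfl | ⟨w, hw⟩
    · exfalso
      have h01 : (0 : Fin n) ≠ 1 := by
        intro h
        have := congrArg Fin.val h
        rw [Fin.val_zero, CycAux.val_one' hn2] at this
        omega
      have := hT 0 1 h01
      simp only [Finset.filter_empty, Finset.card_empty] at this
      omega
    · have hxy : (w + 1 : Fin n) ≠ (w - 1) := by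
        intro h
        have h2 : (1 : Fin n) + 1 = 0 := by linear_combination h
        have hv : ((1 : Fin n).val + (1 : Fin n).val) % n = 0 := by
          have h3 := congrArg Fin.val h2
          rw [Fin.add_def, Fin.val_zero] at h3
          exact h3
        rw [CycAux.val_one' hn2] at hv
        rw [Nat.mod_eq_of_lt (by omega)] at hv
        omega
      have hdw : (cycleGraph n).dist (w + 1) w = (cycleGraph n).dist (w - 1) w := by
        rw [CycAux.cycle_dist hn2, CycAux.cycle_dist hn2]
        have e1 : w - (w + 1) = -1 := by ring
        have e2 : (w + 1) - w = 1 := by ring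
        have e3 : w - (w - 1) = 1 := by ring
        have e4 : (w - 1) - w = -1 := by ring
        rw [e1, e2, e3, e4, min_comm]
      have hsub : (T.filter fun z =>
          (cycleGraph n).dist (w + 1) z ≠ (cycleGraph n).dist (w - 1) z) ⊆ T.erase w := by
        intro z hz
        rw [Finset.mem_filter] at hz
        rw [Finset.mem_erase]
        exact ⟨fun hzw => hz.2 (hzw ▸ hdw), hz.1⟩
      have h1 := hT (w + 1) (w - 1) hxy
      have h2 := Finset.card_le_card hsub
      have h3 := Finset.card_erase_of_mem hw
      have h4 : 1 ≤ T.card := Finset.card_pos.mpr ⟨w, hw⟩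
      omega
  unfold kMetricDim
  apply le_antisymm
  · exact Nat.sInf_le ⟨S, hScard, hres⟩
  · exact le_csInf ⟨k + 1, S, hScard, hres⟩ hlow
end

section
/- For any connected graph G, the partition dimension of G is at most the metric dimension of G plus one. -/
open SimpleGraph Finset

variable {V : Type*}

lemma aux_fsetDist_singleton [DecidableEq V] (G : SimpleGraph V) (v x : V) :
    fsetDist G v {x} = G.dist v x := by
  unfold fsetDist
  have h : {d | ∃ w ∈ ({x} : Finset V), G.dist v w = d} = {G.dist v x} := by
    ext d; simp [eq_comm]
  rw [h, csInf_singleton]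

theorem stmt13 [Fintype V] [DecidableEq V] (G : SimpleGraph V) (hG : G.Connected) :
    partitionDim G ≤ metricDim G + 1 := by
  classical
  -- the set of resolving-set cardinalities is nonempty (univ is resolving)
  have hne : {n | ∃ S : Finset V, S.card = n ∧ IsResolvingSet G ↑S}.Nonempty := by
    refine ⟨(univ : Finset V).card, univ, rfl, ?_⟩
    intro u v huv
    refine ⟨u, by simp, ?_⟩
    rw [G.dist_self]
    exact fun h => huv (((hG.preconnected v u).dist_eq_zero_iff.mp h.symm).symm)
  obtain ⟨S, hScard, hSres⟩ : ∃ S : Finset V, S.card = metricDim G ∧ IsResolvingSet G ↑S := by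
    have hmem := Nat.sInf_mem hne
    exact hmem
  -- build the partition: singletons from S, plus the complement of S if nonempty
  set prts : Finset (Finset V) :=
    (S.image fun x => ({x} : Finset V)) ∪ (if (Sᶜ : Finset V) = ∅ then ∅ else {Sᶜ}) with hprts
  have hmem : ∀ a ∈ prts, (∃ x ∈ S, a = {x}) ∨ (a = Sᶜ ∧ (Sᶜ : Finset V) ≠ ∅) := by
    intro a ha
    simp only [hprts, mem_union, mem_image] at ha
    rcases ha with ⟨x, hx, rfl⟩ | ha
    · exact Or.inl ⟨x, hx, rfl⟩
    · split_ifs at ha with h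
      · simp at ha
      · simp only [mem_singleton] at ha
        exact Or.inr ⟨ha, h⟩
  have hsingle : ∀ x ∈ S, ({x} : Finset V) ∈ prts := by
    intro x hx
    simp only [hprts, mem_union, mem_image]
    exact Or.inl ⟨x, hx, rfl⟩
  have h1 : prts.SupIndep id := by
    rw [Finset.supIndep_iff_pairwiseDisjoint]
    intro a ha b hb hab
    rcases hmem a ha with ⟨x, hx, rfl⟩ | ⟨rfl, -⟩ <;>
      rcases hmem b hb with ⟨y, hy, rfl⟩ | ⟨rfl, -⟩
    · simp only [Function.onFun, id_eq]
      rw [Finset.disjoint_singleton]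
      intro h; exact hab (by rw [h])
    · simp only [Function.onFun, id_eq]
      rw [Finset.disjoint_left]
      intro c hc
      rw [mem_singleton] at hc
      subst hc
      simp [hx]
    · simp only [Function.onFun, id_eq]
      rw [Finset.disjoint_right]
      intro c hc
      rw [mem_singleton] at hc
      subst hc
      simp [hy]
    · exact absurd rfl hab
  have h2 : prts.sup id = univ := by
    ext v
    simp only [mem_univ, iff_true, Finset.mem_sup, id]
    by_cases hv : v ∈ S
    · exact ⟨{v}, hsingle v hv, mem_singleton_self v⟩
    · have hc : (Sᶜ : Finset V) ≠ ∅ := by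
        intro h
        have hvm : v ∈ (Sᶜ : Finset V) := by simp [hv]
        rw [h] at hvm
        simp at hvm
      refine ⟨Sᶜ, ?_, by simp [hv]⟩
      simp [hprts, hc]
  have h3 : ⊥ ∉ prts := by
    intro hbot
    rcases hmem ⊥ hbot with ⟨x, hx, h⟩ | ⟨h, hc⟩
    · exact absurd h.symm (by simp)
    · exact hc h.symm
  set Pt : Finpartition (univ : Finset V) := ⟨prts, h1, h2, h3⟩ with hPt
  have hres : IsResolvingPartition G Pt := by
    intro u v huv
    obtain ⟨x, hx, hd⟩ := hSres u v huv
    refine ⟨{x}, hsingle x hx, ?_⟩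
    rw [aux_fsetDist_singleton, aux_fsetDist_singleton]
    exact hd
  have hle : partitionDim G ≤ prts.card :=
    Nat.sInf_le ⟨Pt, rfl, hres⟩
  have hcard : prts.card ≤ S.card + 1 := by
    calc prts.card ≤ (S.image fun x => ({x} : Finset V)).card +
        (if (Sᶜ : Finset V) = ∅ then (∅ : Finset (Finset V)) else {Sᶜ}).card :=
          Finset.card_union_le _ _
      _ ≤ S.card + 1 := by
          gcongr
          · exact Finset.card_image_le
          · split_ifs <;> simp
  omega
end

section
/- A connected graph G of order n ≥ 2 has partition dimension 2 if and only if G is a path. -/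
open SimpleGraph Finset

variable {V : Type*}

section helpers
variable {G : SimpleGraph V} {P : Finset V} {u v w : V}

lemma fsetDist_exists (hP : P.Nonempty) (v : V) :
    ∃ w ∈ P, G.dist v w = fsetDist G v P := by
  obtain ⟨w, hw⟩ := hP
  exact Nat.sInf_mem (⟨G.dist v w, w, hw, rfl⟩ : {d | ∃ w ∈ P, G.dist v w = d}.Nonempty)

lemma fsetDist_le (hw : w ∈ P) : fsetDist G v P ≤ G.dist v w :=
  Nat.sInf_le ⟨w, hw, rfl⟩

lemma fsetDist_eq_zero_of_mem (hv : v ∈ P) : fsetDist G v P = 0 :=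
  Nat.le_zero.mp ((fsetDist_le hv).trans (by simp))

lemma mem_of_fsetDist_eq_zero (hG : G.Connected) (hP : P.Nonempty)
    (h : fsetDist G v P = 0) : v ∈ P := by
  obtain ⟨w, hw, hd⟩ := fsetDist_exists (G := G) hP v
  have : v = w := hG.dist_eq_zero_iff.mp (hd.trans h)
  rwa [this]

lemma fsetDist_lipschitz (hG : G.Connected) (hP : P.Nonempty) (h : G.Adj u v) :
    fsetDist G v P ≤ fsetDist G u P + 1 := by
  obtain ⟨w, hw, hd⟩ := fsetDist_exists (G := G) hP u
  calc fsetDist G v P ≤ G.dist v w := fsetDist_le hw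
    _ ≤ G.dist v u + G.dist u w := hG.dist_triangle
    _ = fsetDist G u P + 1 := by
        rw [hd, SimpleGraph.dist_comm, (SimpleGraph.dist_eq_one_iff_adj).mpr h]; omega

lemma fsetDist_step_down (hG : G.Connected) (hP : P.Nonempty) (hv : v ∉ P) :
    ∃ u, G.Adj v u ∧ fsetDist G u P + 1 = fsetDist G v P := by
  obtain ⟨w, hw, hd⟩ := fsetDist_exists (G := G) hP v
  have hk : fsetDist G v P ≠ 0 := fun h0 => hv (mem_of_fsetDist_eq_zero hG hP h0)
  obtain ⟨p, hp⟩ := (hG.preconnected v w).exists_walk_length_eq_dist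
  cases p with
  | nil => simp only [SimpleGraph.Walk.length_nil] at hp; omega
  | cons h q =>
    rename_i u
    refine ⟨u, h, ?_⟩
    have h1 : fsetDist G u P ≤ G.dist v w - 1 := by
      have : G.dist u w ≤ q.length := SimpleGraph.dist_le q
      have : G.dist u w ≤ G.dist v w - 1 := by
        simp only [SimpleGraph.Walk.length_cons] at hp; omega
      exact (fsetDist_le hw).trans this
    have h2 : fsetDist G v P ≤ fsetDist G u P + 1 :=
      fsetDist_lipschitz hG hP h.symm
    rw [hd] at h1
    omega

lemma nat_finset_interval (I : Finset ℕ) (hne : I.Nonempty) (h0 : 0 ∉ I)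
    (hstep : ∀ k ∈ I, 2 ≤ k → k - 1 ∈ I) : I = Finset.Icc 1 I.card := by
  have key : ∀ k, k ∈ I → ∀ j, 1 ≤ j → j ≤ k → j ∈ I := by
    intro k
    induction k with
    | zero => intro hk; exact absurd hk h0
    | succ m ih =>
      intro hk j hj1 hj2
      rcases eq_or_lt_of_le hj2 with h | h
      · rwa [h]
      · have hm : m ∈ I := by
          have : 2 ≤ m + 1 := by omega
          simpa using hstep _ hk this
        exact ih hm j hj1 (by omega)
  set M := I.max' hne with hM
  have hIcc : I = Finset.Icc 1 M := by
    apply Finset.Subset.antisymm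
    · intro x hx
      simp only [Finset.mem_Icc]
      exact ⟨Nat.one_le_iff_ne_zero.mpr (fun h => h0 (h ▸ hx)), I.le_max' x hx⟩
    · intro x hx
      simp only [Finset.mem_Icc] at hx
      exact key M (I.max'_mem hne) x hx.1 hx.2
  have : I.card = M := by rw [hIcc]; simp
  rw [this]; exact hIcc
end helpers

lemma path_walk_bound {n : ℕ} {i j : Fin n} (p : (pathGraph n).Walk i j) :
    i.val ≤ j.val + p.length ∧ j.val ≤ i.val + p.length := by
  induction p with
  | nil => simp
  | cons h q ih =>
    rw [pathGraph_adj] at h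
    simp only [SimpleGraph.Walk.length_cons]
    omega

lemma path_dist_le {n : ℕ} : ∀ (d : ℕ) (i j : Fin n), i.val + d = j.val →
    (pathGraph n).dist i j ≤ d := by
  intro d
  induction d with
  | zero =>
    intro i j h
    have : i = j := Fin.ext (by omega)
    simp [this]
  | succ m ih =>
    intro i j h
    have hc : (pathGraph n).Connected := by
      have := i.pos
      obtain ⟨m', rfl⟩ : ∃ m', n = m' + 1 := ⟨n - 1, by omega⟩
      exact pathGraph_connected m'
    have hlt : i.val + 1 < n := by have := j.isLt; omega
    set i' : Fin n := ⟨i.val + 1, by omega⟩ with hi'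
    have hadj : (pathGraph n).Adj i i' := pathGraph_adj.mpr (Or.inl rfl)
    have h1 : (pathGraph n).dist i i' = 1 := SimpleGraph.dist_eq_one_iff_adj.mpr hadj
    have h2 : (pathGraph n).dist i' j ≤ m := ih i' j (by simp [hi']; omega)
    calc (pathGraph n).dist i j ≤ _ + _ := hc.dist_triangle
      _ ≤ m + 1 := by rw [h1]; omega

lemma path_dist_eq {n : ℕ} (i j : Fin n) (h : j.val ≤ i.val) :
    (pathGraph n).dist i j = i.val - j.val := by
  apply le_antisymm
  · rw [SimpleGraph.dist_comm]
    exact path_dist_le _ j i (by omega)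
  · have hc : (pathGraph n).Connected := by
      have := i.pos
      obtain ⟨m', rfl⟩ : ∃ m', n = m' + 1 := ⟨n - 1, by omega⟩
      exact pathGraph_connected m'
    obtain ⟨p, hp⟩ := (hc.preconnected i j).exists_walk_length_eq_dist
    have := path_walk_bound p
    omega

lemma iso_dist {V W : Type*} {G : SimpleGraph V} {H : SimpleGraph W} (e : G ≃g H)
    (hG : G.Connected) (u v : V) : H.dist (e u) (e v) = G.dist u v := by
  apply le_antisymm
  · obtain ⟨p, hp⟩ := (hG.preconnected u v).exists_walk_length_eq_dist
    calc H.dist (e u) (e v) ≤ (p.map e.toHom).length := SimpleGraph.dist_le _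
      _ = G.dist u v := by rw [SimpleGraph.Walk.length_map, hp]
  · have hr : H.Reachable (e u) (e v) := (hG.preconnected u v).map e.toHom
    obtain ⟨q, hq⟩ := hr.exists_walk_length_eq_dist
    have h2 := SimpleGraph.dist_le (q.map e.symm.toHom)
    rw [SimpleGraph.Walk.length_map, hq] at h2
    simpa using h2


section aux
variable {G : SimpleGraph V} {A B P : Finset V} {u v w : V}

lemma fsetDist_singleton (G : SimpleGraph V) (v w : V) : fsetDist G v {w} = G.dist v w := by
  obtain ⟨w', hw', hd⟩ := fsetDist_exists (G := G) ⟨w, Finset.mem_singleton_self w⟩ v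
  rw [Finset.mem_singleton] at hw'
  rw [← hd, hw']

lemma fsetDist_bounds (hG : G.Connected) (hB : B.Nonempty)
    (hdisj : ∀ v ∈ A, v ∉ B) (hcover : ∀ v : V, v ∈ A ∨ v ∈ B)
    (hinj : ∀ u ∈ A, ∀ v ∈ A, u ≠ v → fsetDist G u B ≠ fsetDist G v B) :
    ∀ v ∈ A, 1 ≤ fsetDist G v B ∧ fsetDist G v B ≤ A.card := by
  intro v hv
  set I := A.image (fun v => fsetDist G v B) with hI
  have hcard : I.card = A.card := Finset.card_image_of_injOn
    (fun a ha b hb h => by_contra fun hne =>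
      hinj a (Finset.mem_coe.mp ha) b (Finset.mem_coe.mp hb) hne h)
  have h0 : 0 ∉ I := by
    intro h
    obtain ⟨w, hw, hw0⟩ := Finset.mem_image.mp h
    exact hdisj w hw (mem_of_fsetDist_eq_zero hG hB hw0)
  have hstep : ∀ k ∈ I, 2 ≤ k → k - 1 ∈ I := by
    intro k hk h2
    obtain ⟨w, hw, hwk⟩ := Finset.mem_image.mp hk
    obtain ⟨u, hadj, hu⟩ := fsetDist_step_down hG hB (hdisj w hw)
    have huB : u ∉ B := fun hmem => by
      rw [fsetDist_eq_zero_of_mem hmem] at hu; omega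
    have huA : u ∈ A := (hcover u).resolve_right huB
    exact Finset.mem_image.mpr ⟨u, huA, by omega⟩
  have hIcc := nat_finset_interval I ⟨_, Finset.mem_image_of_mem _ hv⟩ h0 hstep
  have hin : fsetDist G v B ∈ I := Finset.mem_image_of_mem _ hv
  rw [hIcc, hcard] at hin
  simpa [Finset.mem_Icc] using hin

lemma adj_iff_AA (hG : G.Connected) (hB : B.Nonempty)
    (hdisj : ∀ v ∈ A, v ∉ B) (hcover : ∀ v : V, v ∈ A ∨ v ∈ B)
    (hinj : ∀ u ∈ A, ∀ v ∈ A, u ≠ v → fsetDist G u B ≠ fsetDist G v B) :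
    ∀ u ∈ A, ∀ v ∈ A, (G.Adj u v ↔
      fsetDist G u B = fsetDist G v B + 1 ∨ fsetDist G v B = fsetDist G u B + 1) := by
  have step : ∀ u ∈ A, ∀ v ∈ A, fsetDist G u B = fsetDist G v B + 1 → G.Adj u v := by
    intro u hu v hv h
    obtain ⟨w, hadj, hw⟩ := fsetDist_step_down hG hB (hdisj u hu)
    have hwB : w ∉ B := by
      intro hmem
      rw [fsetDist_eq_zero_of_mem hmem] at hw
      have := (fsetDist_bounds hG hB hdisj hcover hinj v hv).1
      omega
    have hwA : w ∈ A := (hcover w).resolve_right hwB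
    have hwv : w = v := by
      by_contra hne
      exact hinj w hwA v hv hne (by omega)
    rwa [hwv] at hadj
  intro u hu v hv
  constructor
  · intro hadj
    have h1 := fsetDist_lipschitz hG hB hadj
    have h2 := fsetDist_lipschitz hG hB hadj.symm
    have h3 := hinj u hu v hv hadj.ne
    omega
  · rintro (h | h)
    · exact step u hu v hv h
    · exact (step v hv u hu h).symm

lemma adj_iff_AB (hG : G.Connected) (hA : A.Nonempty) (hB : B.Nonempty)
    (hdisj : ∀ v ∈ A, v ∉ B) (hdisj' : ∀ v ∈ B, v ∉ A)
    (hinjB : ∀ u ∈ B, ∀ v ∈ B, u ≠ v → fsetDist G u A ≠ fsetDist G v A) :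
    ∀ u ∈ A, ∀ v ∈ B, (G.Adj u v ↔ fsetDist G u B = 1 ∧ fsetDist G v A = 1) := by
  intro u hu v hv
  constructor
  · intro hadj
    have h1 : fsetDist G u B ≤ 1 := by
      have := fsetDist_le (G := G) (v := u) hv
      rwa [SimpleGraph.dist_eq_one_iff_adj.mpr hadj] at this
    have h2 : fsetDist G v A ≤ 1 := by
      have := fsetDist_le (G := G) (v := v) hu
      rwa [SimpleGraph.dist_eq_one_iff_adj.mpr hadj.symm] at this
    have h3 : fsetDist G u B ≠ 0 := fun h => hdisj u hu (mem_of_fsetDist_eq_zero hG hB h)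
    have h4 : fsetDist G v A ≠ 0 := fun h => hdisj' v hv (mem_of_fsetDist_eq_zero hG hA h)
    omega
  · rintro ⟨h1, h2⟩
    obtain ⟨w, hw, hd⟩ := fsetDist_exists (G := G) hB u
    rw [h1] at hd
    have hadj : G.Adj u w := SimpleGraph.dist_eq_one_iff_adj.mp hd
    have hwA1 : fsetDist G w A = 1 := by
      have hle : fsetDist G w A ≤ 1 := by
        have := fsetDist_le (G := G) (v := w) hu
        rwa [SimpleGraph.dist_comm, SimpleGraph.dist_eq_one_iff_adj.mpr hadj] at this
      have hne : fsetDist G w A ≠ 0 := fun h => hdisj' w hw (mem_of_fsetDist_eq_zero hG hA h)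
      omega
    have hwv : w = v := by
      by_contra hne
      exact hinjB w hw v hv hne (by rw [hwA1, h2])
    rwa [hwv] at hadj

end aux

lemma path_of_partition [Fintype V] [DecidableEq V] (G : SimpleGraph V) (hG : G.Connected)
    (Pt : Finpartition (Finset.univ : Finset V)) (hcard : Pt.parts.card = 2)
    (hres : IsResolvingPartition G Pt) : Nonempty (G ≃g pathGraph (Fintype.card V)) := by
  classical
  obtain ⟨A, B, hAB, hparts⟩ := Finset.card_eq_two.mp hcard
  have hA_mem : A ∈ Pt.parts := by rw [hparts]; simp
  have hB_mem : B ∈ Pt.parts := by rw [hparts]; simp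
  have hA_ne : A.Nonempty := Finset.nonempty_iff_ne_empty.mpr
    (fun h => Pt.bot_notMem (by rw [Finset.bot_eq_empty, ← h]; exact hA_mem))
  have hB_ne : B.Nonempty := Finset.nonempty_iff_ne_empty.mpr
    (fun h => Pt.bot_notMem (by rw [Finset.bot_eq_empty, ← h]; exact hB_mem))
  have hdisjAB : Disjoint A B := Pt.disjoint hA_mem hB_mem hAB
  have hunion : A ∪ B = Finset.univ := by
    have := Pt.sup_parts
    rw [hparts] at this
    simpa using this
  have hcover : ∀ v : V, v ∈ A ∨ v ∈ B := fun v => by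
    have : v ∈ A ∪ B := hunion ▸ Finset.mem_univ v
    simpa [Finset.mem_union] using this
  have hdisj : ∀ v ∈ A, v ∉ B := fun v hv hv' =>
    (Finset.disjoint_left.mp hdisjAB) hv hv'
  have hdisj' : ∀ v ∈ B, v ∉ A := fun v hv hv' =>
    (Finset.disjoint_left.mp hdisjAB) hv' hv
  have hinjA : ∀ u ∈ A, ∀ v ∈ A, u ≠ v → fsetDist G u B ≠ fsetDist G v B := by
    intro u hu v hv huv
    obtain ⟨P, hP, hne⟩ := hres u v huv
    rw [hparts, Finset.mem_insert, Finset.mem_singleton] at hP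
    rcases hP with rfl | rfl
    · rw [fsetDist_eq_zero_of_mem hu, fsetDist_eq_zero_of_mem hv] at hne
      exact absurd rfl hne
    · exact hne
  have hinjB : ∀ u ∈ B, ∀ v ∈ B, u ≠ v → fsetDist G u A ≠ fsetDist G v A := by
    intro u hu v hv huv
    obtain ⟨P, hP, hne⟩ := hres u v huv
    rw [hparts, Finset.mem_insert, Finset.mem_singleton] at hP
    rcases hP with rfl | rfl
    · exact hne
    · rw [fsetDist_eq_zero_of_mem hu, fsetDist_eq_zero_of_mem hv] at hne
      exact absurd rfl hne
  have hbA := fsetDist_bounds hG hB_ne hdisj hcover hinjA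
  have hbB := fsetDist_bounds hG hA_ne hdisj' (fun v => (hcover v).symm) hinjB
  have hAA := adj_iff_AA hG hB_ne hdisj hcover hinjA
  have hBB := adj_iff_AA hG hA_ne hdisj' (fun v => (hcover v).symm) hinjB
  have hABadj := adj_iff_AB hG hA_ne hB_ne hdisj hdisj' hinjB
  have hBAadj := adj_iff_AB hG hB_ne hA_ne hdisj' hdisj hinjA
  set n := Fintype.card V with hn
  have hsum : A.card + B.card = n := by
    rw [hn, ← Finset.card_univ, ← hunion, Finset.card_union_of_disjoint hdisjAB]
  have hA1 : 1 ≤ A.card := Finset.card_pos.mpr hA_ne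
  have hB1 : 1 ≤ B.card := Finset.card_pos.mpr hB_ne
  set φ : V → ℕ := fun v =>
    if v ∈ A then A.card - fsetDist G v B else A.card - 1 + fsetDist G v A with hφ
  have hφA : ∀ v ∈ A, φ v = A.card - fsetDist G v B := fun v hv => by
    simp only [hφ, if_pos hv]
  have hφB : ∀ v ∈ B, φ v = A.card - 1 + fsetDist G v A := fun v hv => by
    simp only [hφ, if_neg (hdisj' v hv)]
  have hbound : ∀ v, φ v < n := by
    intro v
    rcases hcover v with hv | hv
    · rw [hφA v hv]
      have := hbA v hv
      omega
    · rw [hφB v hv]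
      have := hbB v hv
      omega
  set ψ : V → Fin n := fun v => ⟨φ v, hbound v⟩ with hψ
  have hψinj : Function.Injective ψ := by
    intro u v h
    have h' : φ u = φ v := congrArg Fin.val h
    rcases hcover u with hu | hu <;> rcases hcover v with hv | hv
    · rw [hφA u hu, hφA v hv] at h'
      by_contra hne
      have := hbA u hu; have := hbA v hv
      exact hinjA u hu v hv hne (by omega)
    · rw [hφA u hu, hφB v hv] at h'
      have := hbA u hu; have := hbB v hv
      omega
    · rw [hφB u hu, hφA v hv] at h'
      have := hbB u hu; have := hbA v hv
      omega
    · rw [hφB u hu, hφB v hv] at h'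
      by_contra hne
      have := hbB u hu; have := hbB v hv
      exact hinjB u hu v hv hne (by omega)
  have hψbij : Function.Bijective ψ :=
    (Fintype.bijective_iff_injective_and_card ψ).mpr ⟨hψinj, by simp [hn]⟩
  have hadj_iff : ∀ u v : V, (pathGraph n).Adj (ψ u) (ψ v) ↔ G.Adj u v := by
    intro u v
    rw [pathGraph_adj]
    show φ u + 1 = φ v ∨ φ v + 1 = φ u ↔ G.Adj u v
    rcases hcover u with hu | hu <;> rcases hcover v with hv | hv
    · rw [hφA u hu, hφA v hv, hAA u hu v hv]
      have := hbA u hu; have := hbA v hv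
      omega
    · rw [hφA u hu, hφB v hv, hABadj u hu v hv]
      have := hbA u hu; have := hbB v hv
      omega
    · rw [hφB u hu, hφA v hv, SimpleGraph.adj_comm, hABadj v hv u hu]
      have := hbB u hu; have := hbA v hv
      omega
    · rw [hφB u hu, hφB v hv, hBB u hu v hv]
      have := hbB u hu; have := hbB v hv
      omega
  exact ⟨⟨Equiv.ofBijective ψ hψbij, fun {u v} => hadj_iff u v⟩⟩

lemma partition_of_path [Fintype V] [DecidableEq V] (G : SimpleGraph V) (hG : G.Connected)
    (hn : 2 ≤ Fintype.card V) (e : G ≃g pathGraph (Fintype.card V)) :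
    ∃ Pt : Finpartition (Finset.univ : Finset V),
      Pt.parts.card = 2 ∧ IsResolvingPartition G Pt := by
  classical
  set n := Fintype.card V with hncard
  have hn0 : 0 < n := by omega
  set x₀ : V := e.symm ⟨0, hn0⟩ with hx0
  have hdist : ∀ v : V, G.dist v x₀ = (e v).val := by
    intro v
    rw [← iso_dist e hG v x₀]
    have hex : e x₀ = ⟨0, hn0⟩ := e.apply_symm_apply _
    rw [hex, path_dist_eq (e v) ⟨0, hn0⟩ (Nat.zero_le _)]
    simp
  have hinj : ∀ u v : V, G.dist u x₀ = G.dist v x₀ → u = v := by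
    intro u v h
    rw [hdist, hdist] at h
    exact e.injective (Fin.ext h)
  have hne_parts : ({x₀} : Finset V) ≠ Finset.univ.erase x₀ := by
    intro h
    have : x₀ ∈ Finset.univ.erase x₀ := h ▸ Finset.mem_singleton_self x₀
    exact (Finset.notMem_erase x₀ _) this
  refine ⟨⟨{{x₀}, Finset.univ.erase x₀}, ?_, ?_, ?_⟩, ?_, ?_⟩
  · rw [Finset.supIndep_iff_pairwiseDisjoint]
    intro a ha b hb hab
    simp only [Finset.coe_insert, Set.mem_insert_iff, Finset.coe_singleton,
      Set.mem_singleton_iff] at ha hb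
    rcases ha with rfl | rfl <;> rcases hb with rfl | rfl
    · exact absurd rfl hab
    · exact Finset.disjoint_singleton_left.mpr (Finset.notMem_erase x₀ _)
    · exact (Finset.disjoint_singleton_left.mpr (Finset.notMem_erase x₀ _)).symm
    · exact absurd rfl hab
  · simp only [Finset.sup_insert, Finset.sup_singleton, id_eq, Finset.sup_eq_union,
      ← Finset.insert_eq]
    exact Finset.insert_erase (Finset.mem_univ _)
  · intro h
    rw [Finset.mem_insert, Finset.mem_singleton] at h
    rcases h with h | h
    · exact absurd h.symm (Finset.singleton_ne_empty x₀)
    · have : (Finset.univ.erase x₀).Nonempty := by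
        rw [← Finset.card_pos, Finset.card_erase_of_mem (Finset.mem_univ _), Finset.card_univ]
        omega
      rw [← h] at this
      exact Finset.not_nonempty_empty this
  · rw [Finset.card_insert_of_notMem (by simpa using hne_parts), Finset.card_singleton]
  · intro u v huv
    refine ⟨{x₀}, Finset.mem_insert_self _ _, ?_⟩
    rw [fsetDist_singleton, fsetDist_singleton]
    exact fun h => huv (hinj u v h)

theorem pd_lower [Fintype V] [DecidableEq V] (G : SimpleGraph V)
    (hn : 2 ≤ Fintype.card V) {m : ℕ}
    (hm : ∃ Pt : Finpartition (Finset.univ : Finset V),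
      Pt.parts.card = m ∧ IsResolvingPartition G Pt) : 2 ≤ m := by
  obtain ⟨Pt, hcard, hres⟩ := hm
  by_contra h
  interval_cases m
  · rw [Finset.card_eq_zero] at hcard
    have hsup := Pt.sup_parts
    rw [hcard, Finset.sup_empty] at hsup
    have huniv : (Finset.univ : Finset V).Nonempty := by
      rw [← Finset.card_pos, Finset.card_univ]; omega
    rw [← hsup] at huniv
    simp [Finset.bot_eq_empty] at huniv
  · obtain ⟨P, hP⟩ := Finset.card_eq_one.mp hcard
    have hPuniv : P = Finset.univ := by
      have := Pt.sup_parts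
      rw [hP] at this
      simpa using this
    obtain ⟨u, v, huv⟩ := Fintype.exists_pair_of_one_lt_card (α := V) (by omega)
    obtain ⟨Q, hQ, hne⟩ := hres u v huv
    rw [hP, Finset.mem_singleton] at hQ
    rw [hQ, hPuniv] at hne
    exact hne (by rw [fsetDist_eq_zero_of_mem (Finset.mem_univ _),
      fsetDist_eq_zero_of_mem (Finset.mem_univ _)])


theorem stmt14 [Fintype V] [DecidableEq V] (G : SimpleGraph V) (hG : G.Connected)
    (hn : 2 ≤ Fintype.card V) :
    partitionDim G = 2 ↔ Nonempty (G ≃g pathGraph (Fintype.card V)) := by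
  constructor
  · intro h
    have hS : {n | ∃ Pt : Finpartition (Finset.univ : Finset V),
        Pt.parts.card = n ∧ IsResolvingPartition G Pt}.Nonempty := by
      by_contra hc
      rw [Set.not_nonempty_iff_eq_empty] at hc
      rw [partitionDim, hc, Nat.sInf_empty] at h
      omega
    have := Nat.sInf_mem hS
    rw [show sInf {n | ∃ Pt : Finpartition (Finset.univ : Finset V),
        Pt.parts.card = n ∧ IsResolvingPartition G Pt} = partitionDim G from rfl, h] at this
    obtain ⟨Pt, hcard, hres⟩ := this
    exact path_of_partition G hG Pt hcard hres
  · rintro ⟨e⟩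
    obtain ⟨Pt, hcard, hres⟩ := partition_of_path G hG hn e
    apply le_antisymm
    · exact Nat.sInf_le ⟨Pt, hcard, hres⟩
    · exact le_csInf ⟨2, Pt, hcard, hres⟩ (fun m hm => pd_lower G hn hm)
end

section
/- If G is a connected bipartite graph, then every resolving set of G is also an edge resolving set; consequently edim(G) ≤ dim(G) for connected bipartite graphs. -/
open SimpleGraph Finset

variable {V : Type*}

lemma zmod2_ne_succ {s t : ZMod 2} (h : s ≠ t) : s = t + 1 := by revert s t; decide

lemma zmod2_self_ne_add_one (z : ZMod 2) : ¬ z = z + 1 := by revert z; decide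

lemma zmod2_cases {a b a' b' : ZMod 2} (h1 : a ≠ b) (h2 : a' ≠ b') : a = a' ∨ a = b' := by
  revert a b a' b'; decide

lemma zmod2_match {a b a' b' : ZMod 2} (h : a = a') (h1 : a ≠ b) (h2 : a' ≠ b') : b = b' := by
  revert a b a' b'; decide

lemma zmod2_match' {a b a' b' : ZMod 2} (h : a = b') (h1 : a ≠ b) (h2 : a' ≠ b') : b = a' := by
  revert a b a' b'; decide

lemma walk_parity {G : SimpleGraph V} (c : V → ZMod 2)
    (hc : ∀ {a b}, G.Adj a b → c a ≠ c b) {u v : V} (p : G.Walk u v) :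
    (p.length : ZMod 2) = c u + c v := by
  induction p with
  | nil => simp [CharTwo.add_self_eq_zero]
  | @cons a b d h p ih =>
    have hab : c a = c b + 1 := by
      exact zmod2_ne_succ (hc h)
    rw [SimpleGraph.Walk.length_cons, Nat.cast_add, Nat.cast_one, ih, hab]
    ring

lemma dist_parity {G : SimpleGraph V} (hG : G.Connected) (c : V → ZMod 2)
    (hc : ∀ {a b}, G.Adj a b → c a ≠ c b) (u v : V) :
    ((G.dist u v : ℕ) : ZMod 2) = c u + c v := by
  obtain ⟨p, hp⟩ := hG.exists_walk_length_eq_dist u v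
  rw [← hp]; exact walk_parity c hc p

lemma key_eq {G : SimpleGraph V} (hG : G.Connected) (c : V → ZMod 2)
    (hc : ∀ {a b}, G.Adj a b → c a ≠ c b) {S : Set V} (hS : IsResolvingSet G S)
    {u v x y : V} (huv : G.Adj u v) (hxy : G.Adj x y) (hcol : c u = c x)
    (h : ∀ w ∈ S, min (G.dist u w) (G.dist v w) = min (G.dist x w) (G.dist y w)) :
    u = x := by
  by_contra hne
  obtain ⟨w, hwS, hw⟩ := hS u x hne
  apply hw
  have hpar : ((G.dist u w : ℕ) : ZMod 2) = ((G.dist x w : ℕ) : ZMod 2) := by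
    rw [dist_parity hG c hc, dist_parity hG c hc, hcol]
  have hduv : G.dist u v = 1 := SimpleGraph.dist_eq_one_iff_adj.mpr huv
  have hdvu : G.dist v u = 1 := SimpleGraph.dist_eq_one_iff_adj.mpr huv.symm
  have hdxy : G.dist x y = 1 := SimpleGraph.dist_eq_one_iff_adj.mpr hxy
  have hdyx : G.dist y x = 1 := SimpleGraph.dist_eq_one_iff_adj.mpr hxy.symm
  have t1 := hG.dist_triangle (u := u) (v := v) (w := w)
  have t2 := hG.dist_triangle (u := v) (v := u) (w := w)
  have t3 := hG.dist_triangle (u := x) (v := y) (w := w)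
  have t4 := hG.dist_triangle (u := y) (v := x) (w := w)
  rw [hduv] at t1
  rw [hdvu] at t2
  rw [hdxy] at t3
  rw [hdyx] at t4
  have hm := h w hwS
  set m := min (G.dist u w) (G.dist v w) with hmdef
  have hu : G.dist u w = m ∨ G.dist u w = m + 1 := by omega
  have hx : G.dist x w = m ∨ G.dist x w = m + 1 := by omega
  have hzero : ¬ ((1 : ZMod 2) = 0) := by decide
  rcases hu with hu | hu <;> rcases hx with hx | hx
  · omega
  · exfalso
    rw [hu, hx] at hpar
    push_cast at hpar
    exact zmod2_self_ne_add_one _ hpar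
  · exfalso
    rw [hu, hx] at hpar
    push_cast at hpar
    exact zmod2_self_ne_add_one _ hpar.symm
  · omega
theorem stmt18 [Fintype V] (G : SimpleGraph V) (hG : G.Connected)
    (hbip : G.Colorable 2) :
    (∀ S : Set V, IsResolvingSet G S → IsEdgeResolvingSet G S) ∧
      edgeMetricDim G ≤ metricDim G := by
  obtain ⟨C⟩ := hbip
  set c : V → ZMod 2 := fun v => ((C v : ℕ) : ZMod 2) with hcdef
  have hc : ∀ {a b}, G.Adj a b → c a ≠ c b := by
    intro a b hab heq
    apply C.valid hab
    have h2 : ((C a : ℕ) : ZMod 2) = ((C b : ℕ) : ZMod 2) := heq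
    rw [ZMod.natCast_eq_natCast_iff] at h2
    have ha := (C a).isLt
    have hb := (C b).isLt
    have h3 : (C a : ℕ) % 2 = (C b : ℕ) % 2 := h2
    exact Fin.ext (by omega)
  have main : ∀ S : Set V, IsResolvingSet G S → IsEdgeResolvingSet G S := by
    intro S hS e he f hf hef
    by_contra hcon
    push_neg at hcon
    apply hef
    induction e using Sym2.ind with
    | _ u v =>
    induction f using Sym2.ind with
    | _ x y =>
    rw [SimpleGraph.mem_edgeSet] at he hf
    have hmin : ∀ w ∈ S, min (G.dist u w) (G.dist v w) = min (G.dist x w) (G.dist y w) := by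
      intro w hw
      have := hcon w hw
      simpa [edgeDist] using this
    have hcases : c u = c x ∨ c u = c y := by
      exact zmod2_cases (hc he) (hc hf)
    rcases hcases with hcol | hcol
    · have hux : u = x := key_eq hG c hc hS he hf hcol hmin
      have hcol' : c v = c y := by
        exact zmod2_match hcol (hc he) (hc hf)
      have hvy : v = y := by
        refine key_eq hG c hc hS he.symm hf.symm hcol' ?_
        intro w hw
        rw [min_comm, hmin w hw, min_comm]
      rw [hux, hvy]
    · have huy : u = y := by
        refine key_eq hG c hc hS he hf.symm hcol ?_
        intro w hw
        rw [hmin w hw, min_comm]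
      have hcol' : c v = c x := by
        exact zmod2_match' hcol (hc he) (hc hf)
      have hvx : v = x := by
        refine key_eq hG c hc hS he.symm hf hcol' ?_
        intro w hw
        rw [min_comm, hmin w hw]
      rw [huy, hvx, Sym2.eq_swap]
  refine ⟨main, ?_⟩
  have hne : {n | ∃ S : Finset V, S.card = n ∧ IsResolvingSet G ↑S}.Nonempty := by
    refine ⟨(Finset.univ : Finset V).card, Finset.univ, rfl, ?_⟩
    intro u v huv
    refine ⟨u, by simp, ?_⟩
    rw [SimpleGraph.dist_self]
    exact (hG.pos_dist_of_ne (Ne.symm huv)).ne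
  obtain ⟨S, hcard, hres⟩ := Nat.sInf_mem hne
  exact Nat.sInf_le ⟨S, hcard, main ↑S hres⟩
end
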